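/- Let (W,S) be a Coxeter system with length function ℓ. Suppose 𝐬 = (s_1,…,s_q) is a word in S whose Demazure product is w ∈ W, and suppose for some k ≤ q that (s_1,…,s_k) is a reduced word for u = s_1⋯s_k. Then there exists a subsequence 𝐪 of (s_{k+1},…,s_q) such that the concatenation (s_1,…,s_k) followed by 𝐪 is a reduced word for w. (In particular u ≤_R w in the right weak order on W.) -/

import Mathlib

/-- The Demazure product of a word in a Coxeter system. -/
noncomputable def demazureProd {B : Type*} {W : Type*} [Group W] {M : CoxeterMatrix B}
    (cs : CoxeterSystem M W) : List B → W
  | [] => 1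
  | s :: t =>
      if cs.length (cs.simple s * demazureProd cs t) > cs.length (demazureProd cs t)
      then cs.simple s * demazureProd cs t
      else demazureProd cs t

/-- The right weak order on a Coxeter group: the transitive (reflexive) closure of
`u <_R u * s` for a simple reflection `s` with `ℓ(u) < ℓ(u s)`. -/
def RightWeakLe {B : Type*} {W : Type*} [Group W] {M : CoxeterMatrix B}
    (cs : CoxeterSystem M W) (u w : W) : Prop :=
  Relation.ReflTransGen (fun x y => ∃ s : B, y = x * cs.simple s ∧ cs.length x < cs.length y) u w

namespace DemazureAux

open CoxeterSystem List

variable {B : Type*} {W : Type*} [Group W] {M : CoxeterMatrix B} (cs : CoxeterSystem M W)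

local prefix:100 "σ" => cs.simple
local prefix:100 "π" => cs.wordProd
local prefix:100 "ℓ" => cs.length

noncomputable local instance : DecidableEq W := Classical.decEq W

theorem conj_simple_eq_simple_iff (i : B) (t : W) :
    σ i * t * σ i = σ i ↔ t = σ i := by
  constructor
  · intro he
    have h1 : (σ i * t) * σ i = 1 * σ i := by rw [one_mul]; exact he
    have h2 : σ i * t = 1 := mul_right_cancel h1
    have h3 : (σ i)⁻¹ = t := inv_eq_of_mul_eq_one_right h2
    rw [← h3, cs.inv_simple]
  · rintro rfl
    rw [cs.simple_mul_simple_self, one_mul]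

/-- The building block of the permutation representation of `W` on `W × ZMod 2`. -/
noncomputable def eta (i : B) : Equiv.Perm (W × ZMod 2) :=
  Function.Involutive.toPerm
    (fun p => (σ i * p.1 * σ i, p.2 + if p.1 = σ i then 1 else 0))
    (by
      rintro ⟨t, ε⟩
      have h : σ i * σ i = 1 := cs.simple_mul_simple_self i
      simp only [Prod.mk.injEq]
      constructor
      · calc σ i * (σ i * t * σ i) * σ i = (σ i * σ i) * t * (σ i * σ i) := by
              simp only [mul_assoc]
          _ = t := by rw [h, one_mul, mul_one]
      · simp only [conj_simple_eq_simple_iff]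
        by_cases ht : t = σ i
        · subst ht
          rw [if_pos rfl, add_assoc,
            show ((1 : ZMod 2) + 1) = 0 by decide, add_zero]
        · simp [ht])

theorem eta_apply (i : B) (t : W) (ε : ZMod 2) :
    eta cs i (t, ε) = (σ i * t * σ i, ε + if t = σ i then 1 else 0) := rfl

/-- Product of `eta`'s along a word. -/
noncomputable def etaProd (ω : List B) : Equiv.Perm (W × ZMod 2) :=
  (ω.map (eta cs)).prod

@[simp] theorem etaProd_nil : etaProd cs [] = 1 := rfl

theorem etaProd_cons (i : B) (ω : List B) :
    etaProd cs (i :: ω) = eta cs i * etaProd cs ω := by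
  simp [etaProd]

theorem etaProd_append (ω₁ ω₂ : List B) :
    etaProd cs (ω₁ ++ ω₂) = etaProd cs ω₁ * etaProd cs ω₂ := by
  simp [etaProd]

theorem leftInvSeq_cons (i : B) (ω : List B) :
    cs.leftInvSeq (i :: ω) = σ i :: List.map (MulAut.conj (σ i)) (cs.leftInvSeq ω) := rfl

theorem rightInvSeq_cons (i : B) (ω : List B) :
    cs.rightInvSeq (i :: ω) = (π ω)⁻¹ * σ i * π ω :: cs.rightInvSeq ω := rfl

theorem etaProd_apply (ω : List B) (t : W) (ε : ZMod 2) :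
    etaProd cs ω (t, ε) =
      (π ω * t * (π ω)⁻¹,
        ε + ((cs.leftInvSeq ω).count (π ω * t * (π ω)⁻¹) : ZMod 2)) := by
  induction ω with
  | nil => simp
  | cons i ω ih =>
    rw [etaProd_cons, Equiv.Perm.mul_apply, ih, eta_apply, leftInvSeq_cons]
    set w := π ω with hw
    have hπ : π (i :: ω) = σ i * w := cs.wordProd_cons i ω
    have hconj : ((MulAut.conj (σ i)) : W → W) (w * t * w⁻¹) = σ i * (w * t * w⁻¹) * σ i := by
      rw [MulAut.conj_apply, cs.inv_simple]
    have hmain : π (i :: ω) * t * (π (i :: ω))⁻¹ = σ i * (w * t * w⁻¹) * σ i := by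
      rw [hπ, mul_inv_rev, cs.inv_simple]
      group
    refine Prod.ext (by simp only [hmain]) ?_
    simp only [hmain]
    have hcount : (σ i :: List.map (⇑(MulAut.conj (σ i))) (cs.leftInvSeq ω)).count
        (σ i * (w * t * w⁻¹) * σ i)
        = (if w * t * w⁻¹ = σ i then 1 else 0)
          + (cs.leftInvSeq ω).count (w * t * w⁻¹) := by
      rw [List.count_cons, ← hconj,
        List.count_map_of_injective _ _ (MulAut.conj (σ i)).injective]
      rw [hconj]
      have hcond : (σ i = σ i * (w * t * w⁻¹) * σ i) ↔ (w * t * w⁻¹ = σ i) := by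
        rw [eq_comm, conj_simple_eq_simple_iff]
      simp only [beq_iff_eq, hcond]
      omega
    rw [hcount]
    push_cast
    ring

theorem alternatingWord_two_mul_succ (i j : B) (n : ℕ) :
    alternatingWord i j (2 * n + 2) = alternatingWord i j (2 * n) ++ [i, j] := by
  rw [show 2 * n + 2 = (2 * n + 1) + 1 from rfl, alternatingWord_succ,
    alternatingWord_succ]
  simp [List.concat_eq_append, List.append_assoc]

theorem alternatingWord_two_mul_succ' (i j : B) (n : ℕ) :
    alternatingWord i j (2 * n + 2) = i :: j :: alternatingWord i j (2 * n) := by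
  rw [show 2 * n + 2 = (2 * n + 1) + 1 from rfl, alternatingWord_succ',
    alternatingWord_succ']
  simp [Nat.even_add_one, parity_simps]

theorem reverse_alternatingWord_two_mul (i j : B) (n : ℕ) :
    (alternatingWord i j (2 * n)).reverse = alternatingWord j i (2 * n) := by
  induction n with
  | zero => simp [alternatingWord]
  | succ n ih =>
    rw [show 2 * (n + 1) = 2 * n + 2 from by ring, alternatingWord_two_mul_succ',
      alternatingWord_two_mul_succ]
    simp [ih]

theorem simple_mul_pow_conj (i j : B) (a : ℕ) :
    σ i * (σ j * σ i) ^ a = ((σ j * σ i)⁻¹) ^ a * σ i := by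
  have key : σ i * (σ j * σ i) = (σ j * σ i)⁻¹ * σ i := by
    rw [mul_inv_rev, cs.inv_simple, cs.inv_simple, mul_assoc]
  induction a with
  | zero => simp
  | succ a ih =>
    rw [pow_succ, ← mul_assoc, ih, mul_assoc, key, ← mul_assoc, ← pow_succ]

theorem hcore (i j : B) (r : ℕ) :
    (π (alternatingWord j i r))⁻¹ * σ (if Even r then i else j) * π (alternatingWord j i r)
      = ((σ j * σ i)⁻¹) ^ r * σ i := by
  have hpi := cs.prod_alternatingWord_eq_mul_pow j i r
  have hinv : (σ j * σ i)⁻¹ = σ i * σ j := by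
    rw [mul_inv_rev, cs.inv_simple, cs.inv_simple]
  set y := σ j * σ i with hy
  rcases Nat.even_or_odd r with hr | hr
  · obtain ⟨a, ha⟩ := hr
    have hd : r / 2 = a := by omega
    rw [if_pos ⟨a, ha⟩] at hpi ⊢
    rw [hpi, hd, one_mul]
    calc (y ^ a)⁻¹ * σ i * y ^ a = (y ^ a)⁻¹ * (σ i * y ^ a) := by rw [mul_assoc]
      _ = (y ^ a)⁻¹ * ((y⁻¹) ^ a * σ i) := by rw [simple_mul_pow_conj]
      _ = (y⁻¹) ^ a * ((y⁻¹) ^ a * σ i) := by rw [inv_pow]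
      _ = (y⁻¹) ^ (a + a) * σ i := by rw [pow_add, mul_assoc]
      _ = (y⁻¹) ^ r * σ i := by rw [ha]
  · obtain ⟨a, ha⟩ := hr
    have hne : ¬ Even r := by rw [ha]; simp [parity_simps]
    have hd : r / 2 = a := by omega
    rw [if_neg hne] at hpi ⊢
    rw [hpi, hd]
    calc (σ i * y ^ a)⁻¹ * σ j * (σ i * y ^ a)
        = (y ^ a)⁻¹ * ((σ i)⁻¹ * σ j * σ i) * y ^ a := by
          rw [mul_inv_rev]; group
      _ = (y ^ a)⁻¹ * (σ i * σ j * σ i) * y ^ a := by rw [cs.inv_simple]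
      _ = (y ^ a)⁻¹ * (y⁻¹ * (σ i * y ^ a)) := by
          rw [← hinv]; group
      _ = (y⁻¹) ^ a * (y⁻¹ * ((y⁻¹) ^ a * σ i)) := by
          rw [simple_mul_pow_conj, inv_pow]
      _ = (y⁻¹) ^ (a + 1 + a) * σ i := by
          rw [pow_add, pow_add, pow_one]; group
      _ = (y⁻¹) ^ r * σ i := by rw [ha]; ring_nf

theorem getD_rightInvSeq_alternatingWord (i j : B) (n : ℕ) :
    ∀ k, k < n → (cs.rightInvSeq (alternatingWord j i n)).getD k 1
      = ((σ j * σ i)⁻¹) ^ (n - 1 - k) * σ i := by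
  induction n with
  | zero => omega
  | succ n ih =>
    intro k hk
    rw [alternatingWord_succ' j i n, rightInvSeq_cons]
    match k with
    | 0 =>
      rw [List.getD_cons_zero]
      have := hcore cs i j n
      simpa using this
    | (k' + 1) =>
      rw [List.getD_cons_succ]
      rw [ih k' (by omega)]
      have : n + 1 - 1 - (k' + 1) = n - 1 - k' := by omega
      rw [this]

theorem braid_count_even (i j : B) (t : W) :
    ∃ c, (cs.rightInvSeq (alternatingWord j i (2 * M i j))).count t = 2 * c := by
  set m := M i j with hm
  set l := cs.rightInvSeq (alternatingWord j i (2 * m)) with hl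
  have hlen : l.length = 2 * m := by
    rw [hl, cs.length_rightInvSeq, CoxeterSystem.length_alternatingWord]
  have hym : ((σ j * σ i)⁻¹) ^ m = 1 := by
    rw [inv_pow, cs.simple_mul_simple_pow' i j, inv_one]
  have hdrop : l.drop m = l.take m := by
    apply List.ext_getElem
    · rw [List.length_drop, List.length_take]; omega
    · intro k h1 h2
      have hk : k < m := by rw [List.length_drop] at h1; omega
      rw [List.getElem_drop, List.getElem_take]
      rw [← List.getD_eq_getElem l 1, ← List.getD_eq_getElem l 1]
      rw [hl, getD_rightInvSeq_alternatingWord cs i j (2 * m) (m + k) (by omega),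
        getD_rightInvSeq_alternatingWord cs i j (2 * m) k (by omega)]
      have h3 : 2 * m - 1 - k = m + (2 * m - 1 - (m + k)) := by omega
      rw [h3, pow_add, hym, one_mul]
  have hsplit : l = l.take m ++ l.take m := by
    conv_lhs => rw [← List.take_append_drop m l]
    rw [hdrop]
  refine ⟨(l.take m).count t, ?_⟩
  conv_lhs => rw [hsplit]
  rw [List.count_append]
  ring

theorem etaProd_braidWord (i j : B) :
    etaProd cs (alternatingWord i j (2 * M i j)) = 1 := by
  apply Equiv.ext
  rintro ⟨t, ε⟩
  rw [etaProd_apply]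
  have hπ : π (alternatingWord i j (2 * M i j)) = 1 := by
    rw [cs.prod_alternatingWord_eq_mul_pow, if_pos (by exact ⟨M i j, by ring⟩),
      one_mul, Nat.mul_div_cancel_left _ (by norm_num), cs.simple_mul_simple_pow]
  rw [hπ]
  have hrev : alternatingWord i j (2 * M i j) = (alternatingWord j i (2 * M i j)).reverse := by
    rw [reverse_alternatingWord_two_mul]
  have hcount : (cs.leftInvSeq (alternatingWord i j (2 * M i j))).count (1 * t * 1⁻¹)
      = (cs.rightInvSeq (alternatingWord j i (2 * M i j))).count (1 * t * 1⁻¹) := by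
    rw [hrev, cs.leftInvSeq_reverse, List.count_reverse]
  obtain ⟨c, hc⟩ := braid_count_even cs i j (1 * t * 1⁻¹)
  rw [hcount, hc]
  have h2 : ((2 * c : ℕ) : ZMod 2) = 0 := by
    push_cast
    rw [show (2 : ZMod 2) = 0 by decide, zero_mul]
  rw [h2, add_zero]
  simp

theorem eta_liftable : M.IsLiftable (eta cs) := by
  intro i j
  have hF : ∀ n : ℕ, (eta cs i * eta cs j) ^ n = etaProd cs (alternatingWord i j (2 * n)) := by
    intro n
    induction n with
    | zero => simp [show alternatingWord i j 0 = [] from rfl]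
    | succ n ih =>
      rw [pow_succ, ih, show 2 * (n + 1) = 2 * n + 2 from by ring,
        alternatingWord_two_mul_succ, etaProd_append]
      simp [etaProd]
  rw [hF (M i j), etaProd_braidWord]

/-- The permutation representation of `W` on `W × ZMod 2`. -/
noncomputable def permRep : W →* Equiv.Perm (W × ZMod 2) :=
  cs.lift ⟨eta cs, eta_liftable cs⟩

theorem etaProd_eq_permRep (ω : List B) : etaProd cs ω = permRep cs (π ω) := by
  induction ω with
  | nil => simp [permRep]
  | cons i ω ih =>
    rw [etaProd_cons, cs.wordProd_cons, map_mul, ih, permRep, cs.lift_apply_simple]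

theorem count_leftInvSeq_parity (ω ω' : List B) (hp : π ω = π ω') (t : W) :
    (((cs.leftInvSeq ω).count t : ZMod 2)) = ((cs.leftInvSeq ω').count t : ZMod 2) := by
  have he : etaProd cs ω = etaProd cs ω' := by
    rw [etaProd_eq_permRep, etaProd_eq_permRep, hp]
  have h1 := etaProd_apply cs ω ((π ω)⁻¹ * t * (π ω)) 0
  have h2 := etaProd_apply cs ω' ((π ω)⁻¹ * t * (π ω)) 0
  have hsimp : π ω * ((π ω)⁻¹ * t * (π ω)) * (π ω)⁻¹ = t := by group
  have hsimp' : π ω' * ((π ω)⁻¹ * t * (π ω)) * (π ω')⁻¹ = t := by rw [← hp]; group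
  rw [hsimp] at h1
  rw [hsimp'] at h2
  rw [he, h2] at h1
  have := (Prod.mk.injEq _ _ _ _).mp h1
  simpa using this.2.symm

theorem left_exchange {ω : List B} (hred : cs.IsReduced ω) {i : B}
    (hlt : ℓ (σ i * π ω) < ℓ (π ω)) :
    ∃ j, j < ω.length ∧ σ i * π ω = π (ω.eraseIdx j) := by
  obtain ⟨τ, hτlen, hτprod⟩ := cs.exists_reduced_word (σ i * π ω)
  have hτred : cs.IsReduced τ := by
    exact hτlen
  have hπ : π (i :: τ) = π ω := by
    rw [cs.wordProd_cons, ← hτprod, ← mul_assoc, cs.simple_mul_simple_self, one_mul]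
  have hmem : σ i ∈ cs.leftInvSeq ω := by
    by_contra hmem
    have hnotτ : σ i ∉ cs.leftInvSeq τ := by
      intro hmem'
      have h := cs.isLeftInversion_of_mem_leftInvSeq hτred hmem'
      have h2 := h.2
      rw [← hτprod] at h2
      rw [← mul_assoc, cs.simple_mul_simple_self, one_mul] at h2
      omega
    have hc1 : (cs.leftInvSeq (i :: τ)).count (σ i) = 1 := by
      rw [leftInvSeq_cons, List.count_cons]
      have hmap0 : (List.map (⇑(MulAut.conj (σ i))) (cs.leftInvSeq τ)).count (σ i) = 0 := by
        rw [List.count_eq_zero]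
        intro hmem''
        obtain ⟨x, hx, hx2⟩ := List.mem_map.mp hmem''
        have : x = σ i := by
          have := hx2
          rw [MulAut.conj_apply, cs.inv_simple] at this
          exact (conj_simple_eq_simple_iff cs i x).mp this
        exact hnotτ (this ▸ hx)
      rw [hmap0]
      simp
    have hpar := count_leftInvSeq_parity cs (i :: τ) ω hπ (σ i)
    rw [hc1, List.count_eq_zero.mpr hmem] at hpar
    simp at hpar
  obtain ⟨j, hj, hje⟩ := List.mem_iff_getElem.mp hmem
  rw [cs.length_leftInvSeq] at hj
  refine ⟨j, hj, ?_⟩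
  have := cs.getD_leftInvSeq_mul_wordProd ω j
  rw [List.getD_eq_getElem _ 1 (by rw [cs.length_leftInvSeq]; exact hj), hje] at this
  exact this

theorem demazureProd_nil : demazureProd cs [] = 1 := rfl

theorem demazureProd_cons (i : B) (t : List B) :
    demazureProd cs (i :: t) =
      if ℓ (σ i * demazureProd cs t) > ℓ (demazureProd cs t)
      then σ i * demazureProd cs t
      else demazureProd cs t := rfl

theorem aux0 (ω : List B) :
    ∃ q : List B, q.Sublist ω ∧ π q = demazureProd cs ω ∧ cs.IsReduced q := by
  induction ω with
  | nil =>
    exact ⟨[], List.Sublist.refl _, by simp [demazureProd_nil], by simp [CoxeterSystem.IsReduced]⟩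
  | cons i ω ih =>
    obtain ⟨q, hsub, hπq, hqred⟩ := ih
    rw [demazureProd_cons]
    by_cases h : ℓ (σ i * demazureProd cs ω) > ℓ (demazureProd cs ω)
    · refine ⟨i :: q, hsub.cons₂ i, ?_, ?_⟩
      · rw [if_pos h, cs.wordProd_cons, hπq]
      · unfold CoxeterSystem.IsReduced
        rw [cs.wordProd_cons, hπq]
        have := (cs.length_simple_mul (demazureProd cs ω) i).resolve_right (by omega)
        rw [this, List.length_cons]
        rw [← hπq, hqred]
    · exact ⟨q, hsub.cons i, by rw [if_neg h]; exact hπq, hqred⟩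

theorem isReduced_append_left {ω₁ ω₂ : List B} (h : cs.IsReduced (ω₁ ++ ω₂)) :
    cs.IsReduced ω₁ := by
  have := h.take ω₁.length
  rwa [List.take_left] at this

theorem aux (ω₁ : List B) (hred : cs.IsReduced ω₁) (ω₂ : List B) :
    ∃ q : List B, q.Sublist ω₂ ∧ π (ω₁ ++ q) = demazureProd cs (ω₁ ++ ω₂) ∧
      cs.IsReduced (ω₁ ++ q) := by
  induction ω₁ with
  | nil =>
    obtain ⟨q, hsub, hπq, hqred⟩ := aux0 cs ω₂
    exact ⟨q, hsub, by simpa using hπq, by simpa using hqred⟩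
  | cons i ω₁' ih =>
    have hred' : cs.IsReduced ω₁' := by
      have : ω₁' = (i :: ω₁').drop 1 := rfl
      rw [this]
      exact hred.drop 1
    obtain ⟨q, hsub, hπq, hqred⟩ := ih hred'
    set w' := demazureProd cs (ω₁' ++ ω₂) with hw'
    have hD : demazureProd cs ((i :: ω₁') ++ ω₂) =
        if ℓ (σ i * w') > ℓ w' then σ i * w' else w' := by
      rw [List.cons_append, demazureProd_cons]
    by_cases h : ℓ (σ i * w') > ℓ w'
    · refine ⟨q, hsub, ?_, ?_⟩
      · rw [hD, if_pos h, List.cons_append, cs.wordProd_cons, hπq]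
      · unfold CoxeterSystem.IsReduced
        rw [List.cons_append, cs.wordProd_cons, hπq]
        have := (cs.length_simple_mul w' i).resolve_right (by omega)
        rw [this, List.length_cons]
        rw [← hπq, hqred]
    · -- exchange case
      have hne := cs.length_simple_mul_ne w' i
      have hlt : ℓ (σ i * w') < ℓ w' := by omega
      rw [← hπq] at hlt
      obtain ⟨j, hjlt, hje⟩ := left_exchange cs hqred hlt
      have hjge : ω₁'.length ≤ j := by
        by_contra hjlt'
        push_neg at hjlt'
        have herase : (ω₁' ++ q).eraseIdx j = ω₁'.eraseIdx j ++ q :=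
          List.eraseIdx_append_of_lt_length hjlt' q
        rw [herase, cs.wordProd_append, cs.wordProd_append, ← mul_assoc] at hje
        have hcancel : σ i * π ω₁' = π (ω₁'.eraseIdx j) := mul_right_cancel hje
        have hlen1 : ℓ (σ i * π ω₁') ≤ (ω₁'.eraseIdx j).length := by
          rw [hcancel]; exact cs.length_wordProd_le _
        have hlen2 : (ω₁'.eraseIdx j).length = ω₁'.length - 1 := by
          rw [List.length_eraseIdx]
          simp [hjlt']
        have hlen3 : ℓ (π (i :: ω₁')) = ω₁'.length + 1 := by
          rw [hred]; simp
        rw [cs.wordProd_cons] at hlen3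
        omega
      set q' := q.eraseIdx (j - ω₁'.length) with hq'
      have herase : (ω₁' ++ q).eraseIdx j = ω₁' ++ q' :=
        List.eraseIdx_append_of_length_le hjge q
      have hqlen : 1 ≤ q.length := by
        rw [List.length_append] at hjlt
        omega
      have hq'len : q'.length = q.length - 1 := by
        rw [hq', List.length_eraseIdx]
        have : j - ω₁'.length < q.length := by
          rw [List.length_append] at hjlt
          omega
        simp [this]
      refine ⟨q', (List.eraseIdx_sublist q _).trans hsub, ?_, ?_⟩
      · rw [hD, if_neg h, List.cons_append, cs.wordProd_cons, ← herase, ← hje,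
          ← mul_assoc, cs.simple_mul_simple_self, one_mul, hπq]
      · unfold CoxeterSystem.IsReduced
        rw [List.cons_append, cs.wordProd_cons, ← herase, ← hje, ← mul_assoc,
          cs.simple_mul_simple_self, one_mul, hπq]
        have hl : ℓ w' = ω₁'.length + q.length := by
          rw [← hπq, hqred, List.length_append]
        rw [hl]
        have hklen : ((ω₁' ++ q).eraseIdx j).length = (ω₁' ++ q).length - 1 := by
          rw [List.length_eraseIdx, if_pos hjlt]
        simp only [List.length_cons, List.length_append, hq'len, hklen]
        omega

theorem rwle_of_reduced_append (q ω₁ : List B) (h : cs.IsReduced (ω₁ ++ q)) :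
    RightWeakLe cs (π ω₁) (π (ω₁ ++ q)) := by
  induction q generalizing ω₁ with
  | nil =>
    rw [List.append_nil]
    exact Relation.ReflTransGen.refl
  | cons s q' ih =>
    have hassoc : ω₁ ++ s :: q' = (ω₁ ++ [s]) ++ q' := by simp
    rw [hassoc] at h ⊢
    have h1 : cs.IsReduced (ω₁ ++ [s]) := isReduced_append_left cs h
    have h0 : cs.IsReduced ω₁ := isReduced_append_left cs h1
    have hstep : ∃ b : B, π (ω₁ ++ [s]) = π ω₁ * σ b ∧ ℓ (π ω₁) < ℓ (π (ω₁ ++ [s])) := by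
      refine ⟨s, by rw [cs.wordProd_append, cs.wordProd_singleton], ?_⟩
      rw [h0, h1]
      simp
    exact Relation.ReflTransGen.head hstep (ih (ω₁ ++ [s]) h)

end DemazureAux

/-- If the Demazure product of `ω₁ ++ ω₂` is `w` and `ω₁` is a reduced word for `u`,
then some subsequence `q` of `ω₂` makes `ω₁ ++ q` a reduced word for `w`; in particular
`u ≤_R w` in the right weak order. -/
theorem stmt_1 {B : Type*} {W : Type*} [Group W] {M : CoxeterMatrix B}
    (cs : CoxeterSystem M W) (ω₁ ω₂ : List B) (w u : W)
    (h : demazureProd cs (ω₁ ++ ω₂) = w)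
    (hprod : cs.wordProd ω₁ = u) (hlen : ω₁.length = cs.length u) :
    (∃ q : List B, q.Sublist ω₂ ∧ cs.wordProd (ω₁ ++ q) = w ∧
      (ω₁ ++ q).length = cs.length w) ∧ RightWeakLe cs u w := by
  have hred : cs.IsReduced ω₁ := by
    unfold CoxeterSystem.IsReduced
    rw [hprod, hlen]
  obtain ⟨q, hsub, hπq, hqred⟩ := DemazureAux.aux cs ω₁ hred ω₂
  rw [h] at hπq
  constructor
  · exact ⟨q, hsub, hπq, by rw [← hπq]; exact hqred.symm⟩
  · have := DemazureAux.rwle_of_reduced_append cs q ω₁ hqred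
    rwa [hprod, hπq] at this
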